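/- Let q be a homogeneous polynomial of degree 2 in the variables x₁,…,x₅ whose polar form is nondegenerate, written as q = x₁·h₁ + q₁ with h₁ a linear form and q₁ a quadratic form in the variables x₂,…,x₅ only. Then h₁ ≠ 0, and for every nonzero a ∈ ℂ⁴ with h₁(a) = 0 and q₁(a) = 0, the linear functionals h₁ and b₁(a,·) on ℂ⁴ are linearly independent, where b₁ is the polar form of q₁. (Equivalently, the plane conic {h₁ = q₁ = 0} ⊂ ℙ³ is nonsingular; these conics are the fibres of the contraction φ : Σ^[2] → F(Y) over points of Σ in the nodal case.) -/

import Mathlib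

open MvPolynomial

private lemma degree_one_single {d : Fin 5 →₀ ℕ} (hd : d.degree = 1) :
    ∃ i, d = Finsupp.single i 1 := by
  rw [Finsupp.degree_apply] at hd
  have hne : d.support.Nonempty := by
    rcases Finset.eq_empty_or_nonempty d.support with h | h
    · rw [h] at hd; simp at hd
    · exact h
  obtain ⟨i, hi⟩ := hne
  have hdi : 1 ≤ d i := Nat.one_le_iff_ne_zero.mpr (Finsupp.mem_support_iff.mp hi)
  have hle : d i ≤ 1 := hd ▸ Finset.single_le_sum (fun _ _ => Nat.zero_le _) hi
  refine ⟨i, Finsupp.eq_single_iff.mpr ⟨?_, le_antisymm hle hdi⟩⟩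
  intro j hj
  simp only [Finset.mem_singleton]
  by_contra hji
  have hsub : ({i, j} : Finset (Fin 5)) ⊆ d.support := by
    intro k hk
    simp only [Finset.mem_insert, Finset.mem_singleton] at hk
    rcases hk with rfl | rfl
    · exact hi
    · exact hj
  have h2 : d i + d j ≤ ∑ k ∈ d.support, d k := by
    rw [← Finset.sum_pair (fun h => hji h.symm)]
    exact Finset.sum_le_sum_of_subset hsub
  have hdj : 1 ≤ d j := Nat.one_le_iff_ne_zero.mpr (Finsupp.mem_support_iff.mp hj)
  omega

/-- evaluation of a polynomial not involving `x 0` only depends on the other coordinates -/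
private lemma eval_indep (p : MvPolynomial (Fin 5) ℂ) (h0 : ∀ m ∈ p.support, m 0 = 0)
    (u v : Fin 5 → ℂ) (huv : ∀ i, i ≠ 0 → u i = v i) : eval u p = eval v p := by
  rw [eval_eq, eval_eq]
  refine Finset.sum_congr rfl fun d hd => ?_
  congr 1
  refine Finset.prod_congr rfl fun i hi => ?_
  have hi0 : i ≠ 0 := by
    rintro rfl
    exact (Finsupp.mem_support_iff.mp hi) (h0 d hd)
  rw [huv i hi0]

private lemma eval_add_deg_one (p : MvPolynomial (Fin 5) ℂ) (hp : p.IsHomogeneous 1)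
    (u v : Fin 5 → ℂ) : eval (u + v) p = eval u p + eval v p := by
  rw [eval_eq, eval_eq, eval_eq, ← Finset.sum_add_distrib]
  refine Finset.sum_congr rfl fun d hd => ?_
  have hdeg : d.degree = 1 := by
    by_contra h
    exact (mem_support_iff.mp hd) (hp.coeff_eq_zero h)
  obtain ⟨i, rfl⟩ := degree_one_single hdeg
  rw [Finsupp.support_single_ne_zero i one_ne_zero]
  simp [mul_add]

private lemma eval_zero_of_homog (p : MvPolynomial (Fin 5) ℂ) (n : ℕ) (hn : n ≠ 0)
    (hp : p.IsHomogeneous n) : eval (0 : Fin 5 → ℂ) p = 0 := by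
  rw [eval_eq]
  refine Finset.sum_eq_zero fun d hd => ?_
  have hdeg : d.degree = n := by
    by_contra h
    exact (mem_support_iff.mp hd) (hp.coeff_eq_zero h)
  have hne : d.support.Nonempty := by
    rcases Finset.eq_empty_or_nonempty d.support with h | h
    · exfalso; apply hn; rw [← hdeg, Finsupp.degree_apply, h]; simp
    · exact h
  obtain ⟨i, hi⟩ := hne
  rw [Finset.prod_eq_zero hi]
  · ring
  · exact zero_pow (Finsupp.mem_support_iff.mp hi)

/-- for a nondegenerate quadratic form `q = x₁·h₁ + q₁` in `x₁, …, x₅`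
(`h₁` linear and `q₁` quadratic in `x₂, …, x₅` only, the coordinates of `ℂ⁴` being
identified with the hyperplane `{x₁ = 0}` of `ℂ⁵`), one has `h₁ ≠ 0` and, at every
nonzero point `a` of the conic `{h₁ = q₁ = 0}`, the linear functionals `h₁` and
`b₁(a,·)` on `ℂ⁴` are linearly independent: the conic is nonsingular. -/
theorem stmt_5 (q h₁ q₁ : MvPolynomial (Fin 5) ℂ)
    (hq : q.IsHomogeneous 2)
    (hqnd : ∀ v : Fin 5 → ℂ,
      (∀ u : Fin 5 → ℂ, (eval (v + u) q - eval v q - eval u q) / 2 = 0) → v = 0)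
    (hh₁ : h₁.IsHomogeneous 1) (hq₁ : q₁.IsHomogeneous 2)
    (hh₁0 : ∀ m ∈ h₁.support, m 0 = 0) (hq₁0 : ∀ m ∈ q₁.support, m 0 = 0)
    (hdec : q = X 0 * h₁ + q₁) :
    h₁ ≠ 0 ∧
    ∀ a : Fin 5 → ℂ, a ≠ 0 → a 0 = 0 → eval a h₁ = 0 → eval a q₁ = 0 →
      ∀ α β : ℂ,
        (∀ x : Fin 5 → ℂ, x 0 = 0 →
          α * eval x h₁ + β * ((eval (a + x) q₁ - eval a q₁ - eval x q₁) / 2) = 0) →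
        α = 0 ∧ β = 0 := by
  have hevalq : ∀ w : Fin 5 → ℂ, eval w q = w 0 * eval w h₁ + eval w q₁ := by
    intro w; rw [hdec]; simp
  -- the projection to the hyperplane x0 = 0
  set π : (Fin 5 → ℂ) → (Fin 5 → ℂ) := fun u => Function.update u 0 0 with hπ
  have hπ0 : ∀ u, π u 0 = 0 := fun u => by simp [hπ]
  have hπne : ∀ u i, i ≠ 0 → π u i = u i := fun u i hi => by
    simp [hπ, Function.update_apply, hi]
  have key1 : h₁ ≠ 0 := by
    intro h
    have hz := hqnd (Pi.single 0 1) ?_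
    · have h10 : (1 : ℂ) = 0 := by simpa using congrFun hz 0
      exact one_ne_zero h10
    intro u
    have h1 : eval (Pi.single 0 1 + u) q₁ = eval u q₁ :=
      eval_indep q₁ hq₁0 _ _ fun i hi => by simp [Pi.single_apply, hi]
    have h2 : eval (Pi.single (0 : Fin 5) (1 : ℂ)) q₁ = eval (0 : Fin 5 → ℂ) q₁ :=
      eval_indep q₁ hq₁0 _ _ fun i hi => by simp [Pi.single_apply, hi]
    rw [hevalq, hevalq, hevalq, h, h1, h2, eval_zero_of_homog q₁ 2 two_ne_zero hq₁]
    simp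
  refine ⟨key1, ?_⟩
  intro a ha ha0 hha hqa α β hab
  have hβ : β = 0 := by
    by_contra hβ
    set v : Fin 5 → ℂ := a + Pi.single 0 (2 * α / β) with hv
    have hva : ∀ i, i ≠ 0 → v i = a i := fun i hi => by
      simp [hv, Pi.single_apply, hi]
    have hz := hqnd v ?_
    · apply ha
      funext i
      by_cases hi : i = 0
      · subst hi; exact ha0
      · have := congrFun hz i
        rw [hva i hi] at this
        simpa using this
    intro u
    have hvh : eval v h₁ = 0 := by
      rw [eval_indep h₁ hh₁0 v a hva, hha]
    have hvq : eval v q₁ = eval a q₁ := eval_indep q₁ hq₁0 v a hva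
    have huh : eval u h₁ = eval (π u) h₁ :=
      eval_indep h₁ hh₁0 u (π u) fun i hi => (hπne u i hi).symm
    have huq : eval u q₁ = eval (π u) q₁ :=
      eval_indep q₁ hq₁0 u (π u) fun i hi => (hπne u i hi).symm
    have hvuh : eval (v + u) h₁ = eval (π u) h₁ := by
      rw [eval_add_deg_one h₁ hh₁ v u, hvh, huh, zero_add]
    have hvuq : eval (v + u) q₁ = eval (a + π u) q₁ :=
      eval_indep q₁ hq₁0 _ _ fun i hi => by
        simp only [Pi.add_apply, hva i hi, hπne u i hi]
    have hkey := hab (π u) (hπ0 u)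
    rw [hqa] at hkey
    rw [hevalq, hevalq, hevalq, hvuh, hvuq, hvh, hvq, hqa, huh, huq]
    have h5 : (v + u) 0 = 2 * α / β + u 0 := by simp [hv, ha0]
    have hv0 : v 0 = 2 * α / β := by simp [hv, ha0]
    rw [h5, hv0]
    field_simp at hkey ⊢
    linear_combination hkey
  subst hβ
  refine ⟨?_, rfl⟩
  by_contra hα
  apply key1
  apply MvPolynomial.funext
  intro x
  have hx := hab (π x) (hπ0 x)
  simp only [zero_mul, mul_zero, add_zero] at hx
  have : eval (π x) h₁ = 0 := by
    rcases mul_eq_zero.mp hx with h | h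
    · exact absurd h hα
    · exact h
  rw [eval_indep h₁ hh₁0 x (π x) fun i hi => (hπne x i hi).symm, this]
  simp
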